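/- For every real λ ≠ 0, the function g(x) = x · ln( (1 − e^{(1/x + 1)λ}) / (1 − e^{λ}) ) is concave on (0, 1]. -/

import Mathlib

open Set Real

/-- Core concavity: for `μ < 0`, `t ↦ log (1 - exp ((t+1)μ))` is concave on `[1, ∞)`. -/
lemma core_concave {μ : ℝ} (hμ : μ < 0) :
    ConcaveOn ℝ (Set.Ici (1 : ℝ)) (fun t => Real.log (1 - Real.exp ((t + 1) * μ))) := by
  refine ⟨convex_Ici 1, ?_⟩
  intro x hx y hy a b ha hb hab
  simp only [smul_eq_mul] at *
  have hx1 : (1:ℝ) ≤ x := hx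
  have hy1 : (1:ℝ) ≤ y := hy
  have hux : (x + 1) * μ < 0 := mul_neg_of_pos_of_neg (by linarith) hμ
  have huy : (y + 1) * μ < 0 := mul_neg_of_pos_of_neg (by linarith) hμ
  have hpx : 0 < 1 - Real.exp ((x + 1) * μ) := by
    have := Real.exp_lt_one_iff.mpr hux; linarith
  have hpy : 0 < 1 - Real.exp ((y + 1) * μ) := by
    have := Real.exp_lt_one_iff.mpr huy; linarith
  have hS : 0 < a * (1 - Real.exp ((x + 1) * μ)) + b * (1 - Real.exp ((y + 1) * μ)) := by
    rcases ha.lt_or_eq with ha' | ha'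
    · have : 0 ≤ b * (1 - Real.exp ((y + 1) * μ)) := mul_nonneg hb hpy.le
      nlinarith
    · have hb' : b = 1 := by linarith
      rw [← ha', hb']; simpa using hpy
  -- convexity of exp along the affine map
  have hexp : Real.exp ((a * x + b * y + 1) * μ)
      ≤ a * Real.exp ((x + 1) * μ) + b * Real.exp ((y + 1) * μ) := by
    have key : (a * x + b * y + 1) * μ = a * ((x + 1) * μ) + b * ((y + 1) * μ) := by
      have : b = 1 - a := by linarith
      subst this; ring
    rw [key]
    have := convexOn_exp.2 (Set.mem_univ ((x + 1) * μ)) (Set.mem_univ ((y + 1) * μ)) ha hb hab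
    simpa using this
  have h1 : a * (1 - Real.exp ((x + 1) * μ)) + b * (1 - Real.exp ((y + 1) * μ))
      ≤ 1 - Real.exp ((a * x + b * y + 1) * μ) := by nlinarith
  calc a * Real.log (1 - Real.exp ((x + 1) * μ)) + b * Real.log (1 - Real.exp ((y + 1) * μ))
      ≤ Real.log (a * (1 - Real.exp ((x + 1) * μ)) + b * (1 - Real.exp ((y + 1) * μ))) := by
        have := strictConcaveOn_log_Ioi.concaveOn.2 (Set.mem_Ioi.mpr hpx) (Set.mem_Ioi.mpr hpy)
          ha hb hab
        simpa using this
    _ ≤ Real.log (1 - Real.exp ((a * x + b * y + 1) * μ)) := Real.log_le_log hS h1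

/-- Perspective construction: if `φ` is concave on `[1, ∞)` then `x ↦ x * φ (1/x)` is
concave on `(0, 1]`. -/
lemma perspective_concave {φ : ℝ → ℝ} (hφ : ConcaveOn ℝ (Set.Ici (1 : ℝ)) φ) :
    ConcaveOn ℝ (Set.Ioc (0 : ℝ) 1) (fun x => x * φ (1 / x)) := by
  refine ⟨convex_Ioc 0 1, ?_⟩
  intro x hx y hy a b ha hb hab
  simp only [smul_eq_mul]
  have hzmem : a * x + b * y ∈ Set.Ioc (0 : ℝ) 1 := (convex_Ioc 0 1) hx hy ha hb hab
  set z := a * x + b * y with hzdef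
  have hz : 0 < z := hzmem.1
  have hx0 : 0 < x := hx.1
  have hy0 : 0 < y := hy.1
  have hix : 1 / x ∈ Set.Ici (1 : ℝ) := Set.mem_Ici.mpr (one_le_one_div hx0 hx.2)
  have hiy : 1 / y ∈ Set.Ici (1 : ℝ) := Set.mem_Ici.mpr (one_le_one_div hy0 hy.2)
  have ha' : 0 ≤ a * x / z := by positivity
  have hb' : 0 ≤ b * y / z := by positivity
  have hab' : a * x / z + b * y / z = 1 := by field_simp; exact hzdef.symm
  have key := hφ.2 hix hiy ha' hb' hab'
  simp only [smul_eq_mul] at key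
  have harg : a * x / z * (1 / x) + b * y / z * (1 / y) = 1 / z := by
    have e1 : a * x / z * (1 / x) = a / z := by field_simp
    have e2 : b * y / z * (1 / y) = b / z := by field_simp
    rw [e1, e2, ← add_div, hab]
  rw [harg] at key
  -- key : a*x/z * φ(1/x) + b*y/z * φ(1/y) ≤ φ (1/z)
  have := mul_le_mul_of_nonneg_left key hz.le
  calc a * (x * φ (1 / x)) + b * (y * φ (1 / y))
      = z * (a * x / z * φ (1 / x) + b * y / z * φ (1 / y)) := by
        field_simp
    _ ≤ z * φ (1 / z) := this

lemma affine_concave (c : ℝ) :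
    ConcaveOn ℝ (Set.Ici (1 : ℝ)) (fun t => (t + 1) * c) := by
  refine ⟨convex_Ici 1, ?_⟩
  intro x _ y _ a b ha hb hab
  simp only [smul_eq_mul]
  have : b = 1 - a := by linarith
  subst this
  apply le_of_eq; ring

lemma phi_concave (lam : ℝ) (hlam : lam ≠ 0) :
    ConcaveOn ℝ (Set.Ici (1 : ℝ))
      (fun t => Real.log (1 - Real.exp ((t + 1) * lam)) - Real.log (1 - Real.exp lam)) := by
  rcases lt_or_gt_of_ne hlam with hneg | hpos
  · have := (core_concave hneg).add_const (-Real.log (1 - Real.exp lam))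
    refine this.congr ?_; intro t _; simp only [Pi.add_apply]; ring
  · -- rewrite using log (1 - e^u) = u + log (1 - e^{-u}) for u > 0
    have hconc : ConcaveOn ℝ (Set.Ici (1 : ℝ))
        (fun t => ((t + 1) * lam + Real.log (1 - Real.exp ((t + 1) * (-lam))))
          - Real.log (1 - Real.exp lam)) := by
      have h1 := (affine_concave lam).add (core_concave (neg_neg_iff_pos.mpr hpos))
      have h2 := h1.add_const (-Real.log (1 - Real.exp lam))
      refine h2.congr ?_; intro t _; simp only [Pi.add_apply]; ring
    refine hconc.congr ?_
    intro t ht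
    have ht1 : (1:ℝ) ≤ t := ht
    have hu : 0 < (t + 1) * lam := mul_pos (by linarith) hpos
    have hneg' : (t + 1) * (-lam) = -((t + 1) * lam) := by ring
    set u := (t + 1) * lam with hudef
    have hnu : 0 < 1 - Real.exp (-u) := by
      have : Real.exp (-u) < 1 := Real.exp_lt_one_iff.mpr (by linarith)
      linarith
    have hsplit : Real.log (1 - Real.exp u) = u + Real.log (1 - Real.exp (-u)) := by
      have h1 : (1 : ℝ) - Real.exp u = -(Real.exp u * (1 - Real.exp (-u))) := by
        rw [mul_sub, ← Real.exp_add]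
        simp [mul_comm]
      rw [h1, Real.log_neg_eq_log, Real.log_mul (Real.exp_ne_zero u) (ne_of_gt hnu),
        Real.log_exp]
    simp only [hneg']
    rw [hsplit]

/-- For every real `λ ≠ 0`, the function
`g(x) = x · ln((1 − e^{(1/x + 1)λ}) / (1 − e^{λ}))` is concave on `(0, 1]`. -/
theorem g_concave_on_Ioc (lam : ℝ) (hlam : lam ≠ 0) :
    ConcaveOn ℝ (Set.Ioc (0 : ℝ) 1)
      (fun x : ℝ =>
        x * Real.log ((1 - Real.exp ((1 / x + 1) * lam)) / (1 - Real.exp lam))) := by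
  have h := perspective_concave (phi_concave lam hlam)
  refine h.congr ?_
  intro x hx
  have hx0 : 0 < x := hx.1
  have hd : (1 : ℝ) - Real.exp lam ≠ 0 := by
    intro h'
    have : Real.exp lam = 1 := by linarith
    have : Real.exp lam = Real.exp 0 := by rw [Real.exp_zero]; linarith
    exact hlam (Real.exp_eq_exp.mp this)
  have hn : (1 : ℝ) - Real.exp ((1 / x + 1) * lam) ≠ 0 := by
    intro h'
    have h1 : Real.exp ((1 / x + 1) * lam) = 1 := by linarith
    have h2 : (1 / x + 1) * lam = 0 := by
      have : Real.exp ((1 / x + 1) * lam) = Real.exp 0 := by rw [Real.exp_zero, h1]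
      exact Real.exp_eq_exp.mp this
    have h3 : 0 < 1 / x + 1 := by positivity
    rcases mul_eq_zero.mp h2 with h | h
    · exact absurd h (ne_of_gt h3)
    · exact hlam h
  simp only []
  rw [Real.log_div hn hd]
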